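/- arXiv:2605.01398 — 2 statements merged into one kernel-verified Lean document; each statement's English description precedes it below -/
import Mathlib

section
/- Let A be an m×m integer matrix and A' an n×n integer matrix, both with nonnegative entries, and let φ : ℤᵐ → ℤⁿ be a surjective ℤ-linear map satisfying φ ∘ A = A' ∘ φ (the situation induced by a covering map of strongly connected finite digraphs Y → X, where A, A' are the adjacency matrices of Y, X and φ is the induced map on vertex groups). Then g_{A'}*(1) divides g_A*(1) in ℤ. (First assertion of the paper's Theorem 'divi_pro'.) -/
open Polynomial

/-- The reverse characteristic polynomial `g_A(u) = det(I - u • A) ∈ ℤ[u]`. -/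
noncomputable def revCharPoly {n : ℕ} (A : Matrix (Fin n) (Fin n) ℤ) : Polynomial ℤ :=
  Matrix.det ((1 : Matrix (Fin n) (Fin n) (Polynomial ℤ)) - (X : Polynomial ℤ) • A.map C)

/-- The first nonvanishing Taylor coefficient `g_A*(1)` of `g_A` at `u = 1`. -/
noncomputable def specialValue {n : ℕ} (A : Matrix (Fin n) (Fin n) ℤ) : ℤ :=
  (Polynomial.taylor 1 (revCharPoly A)).coeff ((revCharPoly A).rootMultiplicity 1)

noncomputable def svP (p : Polynomial ℤ) : ℤ :=
  (Polynomial.taylor 1 p).coeff (p.rootMultiplicity 1)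

lemma taylor_one_X_sub_C_one : Polynomial.taylor (1 : ℤ) (X - C 1) = X := by
  rw [map_sub, taylor_X, taylor_C]; ring

lemma rootMult_factor (r : ℕ) (q : Polynomial ℤ) (hq : q.eval 1 ≠ 0) :
    ((X - C 1) ^ r * q).rootMultiplicity 1 = r := by
  have hq0 : q ≠ 0 := fun h => hq (by simp [h])
  have hne : ((X - C 1 : Polynomial ℤ)) ^ r * q ≠ 0 :=
    mul_ne_zero (pow_ne_zero _ (X_sub_C_ne_zero 1)) hq0
  rw [Polynomial.rootMultiplicity_mul hne, Polynomial.rootMultiplicity_X_sub_C_pow,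
    Polynomial.rootMultiplicity_eq_zero (by simpa [Polynomial.IsRoot] using hq), add_zero]

lemma svP_factor (r : ℕ) (q : Polynomial ℤ) (hq : q.eval 1 ≠ 0) :
    svP ((X - C 1) ^ r * q) = q.eval 1 := by
  have hpow : Polynomial.taylor (1 : ℤ) ((X - C 1) ^ r) = X ^ r := by
    rw [Polynomial.taylor_apply, Polynomial.pow_comp, ← Polynomial.taylor_apply,
      taylor_one_X_sub_C_one]
  have hc := Polynomial.coeff_X_pow_mul (Polynomial.taylor (1:ℤ) q) r 0
  rw [zero_add] at hc
  rw [svP, rootMult_factor r q hq, taylor_mul, hpow, hc, taylor_coeff_zero]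

lemma svP_mul (p q : Polynomial ℤ) (hp : p ≠ 0) (hq : q ≠ 0) :
    svP (p * q) = svP p * svP q := by
  set r := p.rootMultiplicity 1
  set s := q.rootMultiplicity 1
  set p' := p /ₘ (X - C 1) ^ r
  set q' := q /ₘ (X - C 1) ^ s
  have hp' : p = (X - C 1) ^ r * p' := (Polynomial.pow_mul_divByMonic_rootMultiplicity_eq p 1).symm
  have hq' : q = (X - C 1) ^ s * q' := (Polynomial.pow_mul_divByMonic_rootMultiplicity_eq q 1).symm
  have hep : p'.eval 1 ≠ 0 := Polynomial.eval_divByMonic_pow_rootMultiplicity_ne_zero 1 hp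
  have heq : q'.eval 1 ≠ 0 := Polynomial.eval_divByMonic_pow_rootMultiplicity_ne_zero 1 hq
  have hpq : p * q = (X - C 1) ^ (r + s) * (p' * q') := by
    rw [pow_add]; conv_lhs => rw [hp', hq']
    ring
  rw [hpq, svP_factor _ _ (by simp [hep, heq]), eval_mul]
  conv_rhs => rw [hp', hq', svP_factor _ _ hep, svP_factor _ _ heq]

lemma revCharPoly_eval_zero {k : ℕ} (B : Matrix (Fin k) (Fin k) ℤ) :
    (revCharPoly B).eval 0 = 1 := by
  rw [revCharPoly, ← Polynomial.coe_evalRingHom, RingHom.map_det]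
  have h : ((1 : Matrix (Fin k) (Fin k) (Polynomial ℤ)) - (X : Polynomial ℤ) • B.map C).map
      (evalRingHom 0) = 1 := by
    ext i j
    simp [Matrix.map_apply, Matrix.sub_apply, Matrix.smul_apply, Matrix.one_apply, apply_ite]
  rw [RingHom.mapMatrix_apply, h, Matrix.det_one]

lemma revCharPoly_ne_zero {k : ℕ} (B : Matrix (Fin k) (Fin k) ℤ) : revCharPoly B ≠ 0 := by
  intro h
  have := revCharPoly_eval_zero B
  rw [h] at this; simp at this

lemma revCharPoly_conj {k : ℕ} (P Q N : Matrix (Fin k) (Fin k) ℤ) (h : P * Q = 1) :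
    revCharPoly (P * N * Q) = revCharPoly N := by
  have h' : Q * P = 1 := mul_eq_one_comm.mp h
  have hC : ∀ (U V : Matrix (Fin k) (Fin k) ℤ), (U * V).map (C : ℤ →+* Polynomial ℤ)
      = U.map C * V.map C := fun U V => Matrix.map_mul
  have hPQ : (P.map (C : ℤ →+* Polynomial ℤ)) * (Q.map C) = 1 := by
    rw [← hC, h, Matrix.map_one _ (map_zero C) (map_one C)]
  have key : (1 : Matrix (Fin k) (Fin k) (Polynomial ℤ)) - (X : Polynomial ℤ) • (P * N * Q).map C
      = P.map C * ((1 : Matrix (Fin k) (Fin k) (Polynomial ℤ)) - (X : Polynomial ℤ) • N.map C)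
        * Q.map C := by
    rw [Matrix.mul_sub, Matrix.sub_mul, Matrix.mul_one, hPQ, hC, hC,
      Matrix.mul_smul, Matrix.smul_mul]
  rw [revCharPoly, key, Matrix.det_mul, Matrix.det_mul, revCharPoly]
  have : (P.map (C : ℤ →+* Polynomial ℤ)).det * (Q.map C).det = 1 := by
    rw [← Matrix.det_mul, hPQ, Matrix.det_one]
  rw [mul_right_comm, this, one_mul]

lemma revCharPoly_blocks {k n : ℕ} (B : Matrix (Fin k) (Fin k) ℤ) (Cm : Matrix (Fin k) (Fin n) ℤ)
    (D : Matrix (Fin n) (Fin n) ℤ) :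
    Matrix.det ((1 : Matrix (Fin k ⊕ Fin n) (Fin k ⊕ Fin n) (Polynomial ℤ))
        - (X : Polynomial ℤ) • (Matrix.fromBlocks B Cm 0 D).map C)
      = revCharPoly B * revCharPoly D := by
  have key : (1 : Matrix (Fin k ⊕ Fin n) (Fin k ⊕ Fin n) (Polynomial ℤ))
        - (X : Polynomial ℤ) • (Matrix.fromBlocks B Cm 0 D).map C
      = Matrix.fromBlocks (1 - (X : Polynomial ℤ) • B.map C) (-((X : Polynomial ℤ) • Cm.map C)) 0
          (1 - (X : Polynomial ℤ) • D.map C) := by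
    ext i j
    rcases i with i | i <;> rcases j with j | j <;>
      simp [Matrix.one_apply, Matrix.sub_apply, Matrix.smul_apply, Matrix.map_apply]
  rw [key, Matrix.det_fromBlocks_zero₂₁, revCharPoly, revCharPoly]

/-- First assertion of the paper's Theorem `divi_pro`: for a covering situation, i.e. a
surjective `ℤ`-linear map `φ : ℤᵐ → ℤⁿ` intertwining the adjacency operators of two
nonnegative integer matrices `A` and `A'`, the special value `g_{A'}*(1)` divides
`g_A*(1)` in `ℤ`. -/
theorem stmt6 {m n : ℕ} (A : Matrix (Fin m) (Fin m) ℤ) (A' : Matrix (Fin n) (Fin n) ℤ)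
    (hA : ∀ i j, 0 ≤ A i j) (hA' : ∀ i j, 0 ≤ A' i j)
    (φ : (Fin m → ℤ) →ₗ[ℤ] (Fin n → ℤ)) (hφ : Function.Surjective φ)
    (hcomm : φ.comp (Matrix.toLin' A) = (Matrix.toLin' A').comp φ) :
    specialValue A' ∣ specialValue A := by
  classical
  set K := LinearMap.ker φ with hKdef
  haveI : Module.Finite ℤ K := Module.Finite.iff_fg.mpr (IsNoetherian.noetherian K)
  set k := Module.finrank ℤ K with hkdef
  let b : Module.Basis (Fin k) ℤ K := Module.finBasis ℤ K
  obtain ⟨ψ, hψ⟩ := φ.exists_rightInverse_of_surjective (LinearMap.range_eq_top.mpr hφ)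
  have hψ' : ∀ y, φ (ψ y) = y := fun y => LinearMap.congr_fun hψ y
  let π : (Fin m → ℤ) →ₗ[ℤ] (Fin m → ℤ) := LinearMap.id - ψ ∘ₗ φ
  have hker : ∀ x, π x ∈ K := fun x => by
    simp [π, hKdef, LinearMap.mem_ker, map_sub, hψ' (φ x)]
  let toF : (Fin m → ℤ) →ₗ[ℤ] K × (Fin n → ℤ) :=
    LinearMap.prod (π.codRestrict K hker) φ
  let invF : K × (Fin n → ℤ) →ₗ[ℤ] (Fin m → ℤ) :=
    K.subtype ∘ₗ LinearMap.fst ℤ K (Fin n → ℤ) + ψ ∘ₗ LinearMap.snd ℤ K (Fin n → ℤ)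
  have h1 : toF.comp invF = LinearMap.id := by
    apply LinearMap.ext
    rintro ⟨⟨a, ha⟩, y⟩
    have ha' : φ a = 0 := LinearMap.mem_ker.mp ha
    refine Prod.ext (Subtype.ext ?_) ?_
    · simp [toF, invF, π, map_add, ha', hψ']
    · simp [toF, invF, π, map_add, ha', hψ']
  have h2 : invF.comp toF = LinearMap.id := by
    apply LinearMap.ext
    intro x
    simp [toF, invF, π, sub_add_cancel]
  let e0 : (Fin m → ℤ) ≃ₗ[ℤ] K × (Fin n → ℤ) := LinearEquiv.ofLinear toF invF h1 h2
  let e' : (Fin m → ℤ) ≃ₗ[ℤ] (Fin k ⊕ Fin n → ℤ) :=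
    e0 ≪≫ₗ (b.equivFun.prodCongr (LinearEquiv.refl ℤ (Fin n → ℤ))) ≪≫ₗ
      (LinearEquiv.sumArrowLequivProdArrow (Fin k) (Fin n) ℤ ℤ).symm
  have hsnd : ∀ (x : Fin m → ℤ) (i : Fin n), e' x (Sum.inr i) = φ x i := by
    intro x i
    simp [e', e0, toF, π, LinearEquiv.prodCongr_apply]
  let c : Module.Basis (Fin k ⊕ Fin n) ℤ (Fin m → ℤ) := Module.Basis.ofEquivFun e'
  have hec : ∀ j, e' (c j) = Pi.single j 1 := by
    intro j
    have : (c j : Fin m → ℤ) = e'.symm (Pi.single j 1) := by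
      rw [show (c : (Fin k ⊕ Fin n) → (Fin m → ℤ)) = fun i => e'.symm (Pi.single i 1) from
        Module.Basis.coe_ofEquivFun e']
    rw [this, e'.apply_symm_apply]
  have hφc : ∀ (j : Fin k ⊕ Fin n) (i : Fin n),
      φ (c j) i = Pi.single (M := fun _ : Fin k ⊕ Fin n => ℤ) j 1 (Sum.inr i) := by
    intro j i
    rw [← hsnd, hec]
  have hcomm' : ∀ x, φ (Matrix.toLin' A x) = Matrix.toLin' A' (φ x) :=
    fun x => LinearMap.congr_fun hcomm x
  let M := LinearMap.toMatrix c c (Matrix.toLin' A)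
  have hMapp : ∀ i j, M i j = e' (Matrix.toLin' A (c j)) i := by
    intro i j
    show (LinearMap.toMatrix c c) (Matrix.toLin' A) i j = _
    rw [LinearMap.toMatrix_apply]
    exact Module.Basis.ofEquivFun_repr_apply e' _ _
  have hM21 : ∀ i j, M (Sum.inr i) (Sum.inl j) = 0 := by
    intro i j
    rw [hMapp, hsnd, hcomm']
    have hφ0 : φ (c (Sum.inl j)) = 0 := by
      funext i'
      rw [hφc]
      simp [Pi.single_apply]
    rw [hφ0, map_zero]
    rfl
  have hM22 : ∀ i j, M (Sum.inr i) (Sum.inr j) = A' i j := by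
    intro i j
    rw [hMapp, hsnd, hcomm']
    have hφ1 : φ (c (Sum.inr j)) = Pi.single j 1 := by
      funext i'
      rw [hφc]
      simp [Pi.single_apply]
    rw [hφ1, Matrix.toLin'_apply, Matrix.mulVec_single]
    simp
  have hMblock : M = Matrix.fromBlocks M.toBlocks₁₁ M.toBlocks₁₂ 0 A' := by
    ext i j
    rcases i with i | i <;> rcases j with j | j <;>
      simp [Matrix.toBlocks₁₁, Matrix.toBlocks₁₂, hM21, hM22]
  let pib := Pi.basisFun ℤ (Fin m)
  let Pm := LinearMap.toMatrix pib c LinearMap.id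
  let Qm := LinearMap.toMatrix c pib LinearMap.id
  have hPQ : Pm * Qm = 1 := by
    rw [show Pm * Qm = LinearMap.toMatrix c c (LinearMap.id.comp LinearMap.id) from
      (LinearMap.toMatrix_comp c pib c LinearMap.id LinearMap.id).symm]
    rw [LinearMap.id_comp, LinearMap.toMatrix_id]
  have hA : LinearMap.toMatrix pib pib (Matrix.toLin' A) = A := by
    rw [show pib = Pi.basisFun ℤ (Fin m) from rfl, LinearMap.toMatrix_eq_toMatrix',
      LinearMap.toMatrix'_toLin']
  have hMfact : M = Pm * A * Qm := by
    have step : M = LinearMap.toMatrix c c (LinearMap.id ∘ₗ (Matrix.toLin' A ∘ₗ LinearMap.id)) := by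
      rw [LinearMap.comp_id, LinearMap.id_comp]
    rw [step, LinearMap.toMatrix_comp c pib c, LinearMap.toMatrix_comp c pib pib, hA, Matrix.mul_assoc]
  have hmkn : m = k + n := by
    have h1 := LinearEquiv.finrank_eq e'
    rw [Module.finrank_fin_fun, Module.finrank_pi] at h1
    simpa using h1
  let σ : Fin m ≃ (Fin k ⊕ Fin n) := Fintype.equivOfCardEq (by simp [hmkn])
  let R := Pm.submatrix ⇑σ (id : Fin m → Fin m)
  let S := Qm.submatrix (id : Fin m → Fin m) ⇑σ
  have hRS : R * S = 1 := by
    ext i j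
    have hh : (R * S) i j = (Pm * Qm) (σ i) (σ j) := by
      simp [R, S, Matrix.mul_apply]
    rw [hh, hPQ]
    simp [Matrix.one_apply, EmbeddingLike.apply_eq_iff_eq]
  have hMsub : M.submatrix ⇑σ ⇑σ = R * A * S := by
    rw [hMfact]
    ext i j
    simp [R, S, Matrix.mul_apply, Finset.sum_mul, Finset.mul_sum]
  have hstep1 : revCharPoly (M.submatrix ⇑σ ⇑σ) = revCharPoly A := by
    rw [hMsub]
    exact revCharPoly_conj R S A hRS
  have hstep2 : revCharPoly (M.submatrix ⇑σ ⇑σ)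
      = Matrix.det ((1 : Matrix (Fin k ⊕ Fin n) (Fin k ⊕ Fin n) (Polynomial ℤ))
          - (X : Polynomial ℤ) • M.map C) := by
    rw [revCharPoly]
    have hsm : (1 : Matrix (Fin m) (Fin m) (Polynomial ℤ))
          - (X : Polynomial ℤ) • (M.submatrix ⇑σ ⇑σ).map C
        = ((1 : Matrix (Fin k ⊕ Fin n) (Fin k ⊕ Fin n) (Polynomial ℤ))
          - (X : Polynomial ℤ) • M.map C).submatrix ⇑σ ⇑σ := by
      ext i j
      simp [Matrix.submatrix_apply, Matrix.one_apply, Matrix.sub_apply, Matrix.smul_apply,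
        Matrix.map_apply, EmbeddingLike.apply_eq_iff_eq]
    rw [hsm, Matrix.det_submatrix_equiv_self]
  have hstep3 : Matrix.det ((1 : Matrix (Fin k ⊕ Fin n) (Fin k ⊕ Fin n) (Polynomial ℤ))
          - (X : Polynomial ℤ) • M.map C)
      = revCharPoly M.toBlocks₁₁ * revCharPoly A' := by
    conv_lhs => rw [hMblock]
    exact revCharPoly_blocks _ _ _
  have hfact : revCharPoly A = revCharPoly M.toBlocks₁₁ * revCharPoly A' := by
    rw [← hstep1, hstep2, hstep3]
  have hfin : specialValue A = svP (revCharPoly M.toBlocks₁₁) * specialValue A' := by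
    show svP (revCharPoly A) = _
    rw [hfact, svP_mul _ _ (revCharPoly_ne_zero _) (revCharPoly_ne_zero _)]
    rfl
  rw [hfin]
  exact dvd_mul_left _ _
end

section
/- Let p be an odd prime, Δ⁺ = (ℤ/pℤ)ˣ/⟨σ_{−1}⟩, N⁺ = Σ_{τ∈Δ⁺} τ ∈ ℤ[Δ⁺], and let M : ℤ[Δ⁺] → ℤ[Δ⁺] be multiplication by 1 + p·N⁺ (the adjacency operator of the intermediate cover Y⁺ of the paper's digraph cover). Then, computing determinants of ℤ[u]-linear maps with respect to the basis Δ⁺: det(I − u·M) = (1 − u)^{(p−3)/2} · (1 − (1 + p(p−1)/2)·u) in ℤ[u]; consequently the first nonvanishing Taylor coefficient of det(I − u·M) at u = 1 equals (−1)^{(p−1)/2} · ((p−1)/2) · p, and the torsion subgroup of ℤ[Δ⁺]/(p·N⁺·ℤ[Δ⁺]) has cardinality p. (Paper's Corollary 'plus_part': g_{Y⁺}*(1) = (−1)^{(p−1)/2}·((p−1)/2)·p and #BF(Y⁺)_tors = p.) -/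
open Polynomial

/-- The group `Δ⁺ = (ℤ/pℤ)ˣ/⟨σ₋₁⟩`, the quotient of `Δ = (ℤ/pℤ)ˣ` by the subgroup generated
by `j = σ₋₁`. -/
def DeltaPlus (p : ℕ) [Fact p.Prime] : Type :=
  (ZMod p)ˣ ⧸ Subgroup.zpowers (-1 : (ZMod p)ˣ)

instance (p : ℕ) [Fact p.Prime] : CommGroup (DeltaPlus p) :=
  QuotientGroup.Quotient.commGroup (Subgroup.zpowers (-1 : (ZMod p)ˣ))

/-- The norm element `N⁺ = Σ_{τ ∈ Δ⁺} τ ∈ ℤ[Δ⁺]`. -/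
noncomputable def normPlus (p : ℕ) [Fact p.Prime] : MonoidAlgebra ℤ (DeltaPlus p) :=
  ∑ᶠ τ : DeltaPlus p, MonoidAlgebra.single τ (1 : ℤ)

/-- The matrix, with respect to the basis `Δ⁺` of `ℤ[Δ⁺]`, of the multiplication-by-
`(1 + p·N⁺)` operator (the adjacency operator of the intermediate cover `Y⁺`): its
`(σ, τ)` entry is the coefficient of `σ` in `(1 + p·N⁺)·τ`, i.e. the value of the group-ring
element `1 + p·N⁺` at `σ·τ⁻¹`. -/
noncomputable def adjMatPlus (p : ℕ) [Fact p.Prime] :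
    Matrix (DeltaPlus p) (DeltaPlus p) ℤ :=
  fun σ τ => ((1 : MonoidAlgebra ℤ (DeltaPlus p)) + (p : ℤ) • normPlus p).coeff (σ * τ⁻¹)

set_option linter.unusedSectionVars false

section lemmas
variable (p : ℕ) [Fact p.Prime] [Fintype (DeltaPlus p)] [DecidableEq (DeltaPlus p)]

lemma normPlus_eq : normPlus p = ∑ τ : DeltaPlus p, MonoidAlgebra.single τ (1 : ℤ) :=
  finsum_eq_sum_of_fintype _

lemma normPlus_apply (g : DeltaPlus p) : (normPlus p).coeff g = 1 := by
  rw [normPlus_eq]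
  rw [MonoidAlgebra.coeff_sum, Finsupp.finset_sum_apply]
  simp [MonoidAlgebra.coeff_single, Finsupp.single_apply]

lemma adjMatPlus_apply (σ τ : DeltaPlus p) :
    adjMatPlus p σ τ = (if σ = τ then 1 else 0) + (p : ℤ) := by
  have h1 : (1 : MonoidAlgebra ℤ (DeltaPlus p)).coeff (σ * τ⁻¹)
      = if σ = τ then 1 else 0 := by
    rw [MonoidAlgebra.one_def, MonoidAlgebra.coeff_single, Finsupp.single_apply]
    congr 1
    simp [eq_comm, mul_inv_eq_one]
  show ((1 : MonoidAlgebra ℤ (DeltaPlus p)) + (p : ℤ) • normPlus p).coeff (σ * τ⁻¹) = _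
  rw [MonoidAlgebra.coeff_add, Finsupp.add_apply, MonoidAlgebra.coeff_smul, Finsupp.smul_apply, normPlus_apply, h1, smul_eq_mul, mul_one]

lemma card_deltaPlus (hp : Odd p) : Fintype.card (DeltaPlus p) = (p - 1) / 2 := by
  have hp2 : (2:ℕ) < p := by
    rcases hp with ⟨k, hk⟩
    have := (Fact.out : p.Prime).two_le
    omega
  have hord : orderOf (-1 : (ZMod p)ˣ) = 2 := by
    apply orderOf_eq_prime
    · ext; simp
    · intro h
      have h' : (-1 : ZMod p) = 1 := by simpa using congrArg Units.val h
      haveI : Fact (2 < p) := ⟨hp2⟩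
      exact ZMod.neg_one_ne_one h'
  have hcard := Subgroup.card_eq_card_quotient_mul_card_subgroup
    (Subgroup.zpowers (-1 : (ZMod p)ˣ))
  rw [Nat.card_zpowers, hord] at hcard
  have hu : Nat.card (ZMod p)ˣ = p - 1 := by
    rw [Nat.card_eq_fintype_card, ZMod.card_units]
  have hq : Nat.card (DeltaPlus p) = Fintype.card (DeltaPlus p) :=
    Nat.card_eq_fintype_card
  have hcast : Nat.card ((ZMod p)ˣ ⧸ Subgroup.zpowers (-1 : (ZMod p)ˣ))
      = Nat.card (DeltaPlus p) := rfl
  omega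

end lemmas

lemma det_aux' {ι : Type*} [Fintype ι] [DecidableEq ι] [Nonempty ι]
    {F : Type*} [Field F] (a b : F) (ha : a ≠ 0) :
    Matrix.det (a • (1 : Matrix ι ι F) + b • Matrix.of (fun _ _ => (1 : F))) =
      a ^ (Fintype.card ι - 1) * (a + (Fintype.card ι : F) * b) := by
  have h1 : a • (1 : Matrix ι ι F) + b • Matrix.of (fun _ _ => (1 : F)) =
      a • ((1 : Matrix ι ι F) +
        Matrix.replicateCol Unit (fun _ => b / a) * Matrix.replicateRow Unit (fun _ => (1 : F))) := by
    ext i j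
    by_cases h : i = j <;>
      simp [Matrix.mul_apply, Matrix.one_apply, h, mul_div_cancel₀, ha,
        mul_div_assoc, mul_comm, mul_div_cancel_left₀]
    field_simp
  rw [h1, Matrix.det_smul, Matrix.det_one_add_replicateCol_mul_replicateRow]
  simp only [dotProduct, one_mul, Finset.sum_const, Finset.card_univ, nsmul_eq_mul]
  obtain ⟨k, hk⟩ : ∃ k, Fintype.card ι = k + 1 :=
    ⟨Fintype.card ι - 1, (Nat.succ_pred_eq_of_pos Fintype.card_pos).symm⟩
  rw [hk]
  simp only [Nat.add_sub_cancel]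
  field_simp
  ring

section part1
variable (p : ℕ) [Fact p.Prime] [Fintype (DeltaPlus p)] [DecidableEq (DeltaPlus p)]

lemma matrix_eq :
    (1 : Matrix (DeltaPlus p) (DeltaPlus p) (Polynomial ℤ)) -
        (X : Polynomial ℤ) • (adjMatPlus p).map C
      = ((1 - X : Polynomial ℤ)) • (1 : Matrix (DeltaPlus p) (DeltaPlus p) (Polynomial ℤ)) +
        ((-(C (p:ℤ) * X) : Polynomial ℤ)) • Matrix.of (fun _ _ => (1 : Polynomial ℤ)) := by
  apply Matrix.ext
  intro σ τ
  simp only [Matrix.sub_apply, Matrix.smul_apply, Matrix.add_apply, Matrix.map_apply,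
    Matrix.of_apply, adjMatPlus_apply, smul_eq_mul]
  by_cases h : σ = τ
  · simp only [Matrix.one_apply, h, if_true]
    push_cast
    rw [map_add, map_one]
    ring
  · simp only [Matrix.one_apply, if_neg h]
    push_cast
    ring

lemma det_eq (hp : Odd p) :
    Matrix.det ((1 : Matrix (DeltaPlus p) (DeltaPlus p) (Polynomial ℤ)) -
        (X : Polynomial ℤ) • (adjMatPlus p).map C) =
      (1 - X) ^ ((p - 3) / 2) *
        (1 - C (((1 + p * ((p - 1) / 2) : ℕ) : ℤ)) * X) := by
  haveI : Nonempty (DeltaPlus p) := ⟨1⟩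
  have hp3 : 3 ≤ p := by
    rcases hp with ⟨k, hk⟩; have := (Fact.out : p.Prime).two_le; omega
  have hm : Fintype.card (DeltaPlus p) = (p-1)/2 := card_deltaPlus p hp
  set F := FractionRing (Polynomial ℤ)
  set φ := algebraMap (Polynomial ℤ) F with hφ
  have hinj : Function.Injective φ := IsFractionRing.injective (Polynomial ℤ) F
  apply hinj
  rw [RingHom.map_det, RingHom.mapMatrix_apply, matrix_eq p]
  have hmap : ((((1 - X : Polynomial ℤ)) • (1 : Matrix (DeltaPlus p) (DeltaPlus p) (Polynomial ℤ)) +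
        ((-(C (p:ℤ) * X) : Polynomial ℤ)) • Matrix.of (fun _ _ => (1 : Polynomial ℤ))).map φ)
      = φ (1-X) • (1 : Matrix (DeltaPlus p) (DeltaPlus p) F) +
        φ (-(C (p:ℤ)*X)) • Matrix.of (fun _ _ => (1:F)) := by
    ext i j
    by_cases h : i = j <;> simp [Matrix.map_apply, Matrix.one_apply, h]
  have hXne : (1 - X : Polynomial ℤ) ≠ 0 := fun h => by
    simpa using congrArg (Polynomial.eval 0) h
  rw [hmap, det_aux' _ _ ((map_ne_zero_iff φ hinj).mpr hXne)]
  have hcast : (Fintype.card (DeltaPlus p) : F)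
      = φ ((Fintype.card (DeltaPlus p) : ℕ) : Polynomial ℤ) := by
    rw [map_natCast]
  rw [hcast, ← map_pow, ← map_mul, ← map_add, ← map_mul]
  refine congrArg φ ?_
  have h31 : (p-1)/2 - 1 = (p-3)/2 := by omega
  have hC : (C (((1 + p * ((p - 1) / 2) : ℕ) : ℤ)) : Polynomial ℤ)
      = 1 + C (p:ℤ) * C (((p-1)/2 : ℕ) : ℤ) := by
    rw [← C_1, ← C_mul, ← C_add]
    congr 1
  have hk : (((p-1)/2 : ℕ) : Polynomial ℤ) = C (((p-1)/2 : ℕ) : ℤ) :=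
    (Polynomial.C_eq_natCast _).symm
  rw [hm, h31, hC, ← hk]
  ring

end part1

section part3
variable (p : ℕ) [Fact p.Prime] [Fintype (DeltaPlus p)] [DecidableEq (DeltaPlus p)]

lemma single_mul_normPlus (a : DeltaPlus p) (r : ℤ) :
    MonoidAlgebra.single a r * normPlus p = r • normPlus p := by
  rw [normPlus_eq, Finset.mul_sum, Finset.smul_sum]
  simp only [MonoidAlgebra.single_mul_single, mul_one, Finsupp.smul_single, smul_eq_mul]
  exact Fintype.sum_equiv (Equiv.mulLeft a) _ _ (fun i => by simp [MonoidAlgebra.smul_single'])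

lemma mul_normPlus (x : MonoidAlgebra ℤ (DeltaPlus p)) :
    x * normPlus p = (∑ g, x.coeff g) • normPlus p := by
  have hx : x = ∑ g : DeltaPlus p, MonoidAlgebra.single g (x.coeff g) := by
    ext a
    rw [MonoidAlgebra.coeff_sum, Finsupp.finset_sum_apply]
    simp [MonoidAlgebra.coeff_single, Finsupp.single_apply]
  conv_lhs => rw [hx]
  rw [Finset.sum_mul]
  simp_rw [single_mul_normPlus]
  rw [← Finset.sum_smul]

lemma mem_span_iff (x : MonoidAlgebra ℤ (DeltaPlus p)) :
    x ∈ Ideal.span {(p : ℤ) • normPlus p} ↔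
      ∃ c : ℤ, x = (c * p) • normPlus p := by
  rw [Ideal.mem_span_singleton']
  constructor
  · rintro ⟨r, rfl⟩
    refine ⟨∑ g, r.coeff g, ?_⟩
    rw [mul_smul_comm, mul_normPlus, smul_smul, mul_comm]
  · rintro ⟨c, rfl⟩
    refine ⟨MonoidAlgebra.single 1 c, ?_⟩
    rw [mul_smul_comm, single_mul_normPlus, smul_smul, mul_comm]

end part3

section tors
variable (p : ℕ) [Fact p.Prime] [Fintype (DeltaPlus p)] [DecidableEq (DeltaPlus p)]

lemma torsion_card :
    Nat.card (Submodule.torsion ℤ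
      (MonoidAlgebra ℤ (DeltaPlus p) ⧸ Ideal.span {(p : ℤ) • normPlus p})) = p := by
  classical
  have hp0 : (p : ℤ) ≠ 0 := Int.natCast_ne_zero.mpr (Fact.out : p.Prime).ne_zero
  set R := MonoidAlgebra ℤ (DeltaPlus p) with hR
  set I : Ideal R := Ideal.span {(p : ℤ) • normPlus p} with hI
  let θ : ℤ →ₗ[ℤ] R ⧸ I :=
    { toFun := fun c => Submodule.Quotient.mk (c • normPlus p)
      map_add' := fun a b => by
        show Submodule.Quotient.mk ((a + b) • normPlus p)
            = Submodule.Quotient.mk (a • normPlus p) + Submodule.Quotient.mk (b • normPlus p)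
        rw [add_smul, Submodule.Quotient.mk_add]
      map_smul' := fun a b => by
        show Submodule.Quotient.mk ((a * b) • normPlus p)
            = a • Submodule.Quotient.mk (b • normPlus p)
        rw [← Submodule.Quotient.mk_smul, smul_smul] }
  have hθ : ∀ c : ℤ, θ c = Submodule.Quotient.mk (c • normPlus p) := fun _ => rfl
  have happ : ∀ (c : ℤ) (g : DeltaPlus p), (c • normPlus p).coeff g = c := fun c g => by
    rw [MonoidAlgebra.coeff_smul, Finsupp.smul_apply, normPlus_apply, smul_eq_mul, mul_one]
  have hker : LinearMap.ker θ = Ideal.span {(p : ℤ)} := by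
    ext c
    rw [LinearMap.mem_ker, hθ, Submodule.Quotient.mk_eq_zero]
    rw [show (c • normPlus p ∈ I) ↔ ∃ d : ℤ, c • normPlus p = (d * p) • normPlus p from
      mem_span_iff p _, Ideal.mem_span_singleton]
    constructor
    · rintro ⟨d, hd⟩
      have := congrArg (fun z : MonoidAlgebra ℤ (DeltaPlus p) => z.coeff 1) hd
      simp only [happ] at this
      exact ⟨d, by rw [this]; ring⟩
    · rintro ⟨d, rfl⟩
      exact ⟨d, by rw [mul_comm]⟩
  have hrange : LinearMap.range θ = Submodule.torsion ℤ (R ⧸ I) := by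
    ext x
    rw [LinearMap.mem_range, Submodule.mem_torsion_iff]
    constructor
    · rintro ⟨c, rfl⟩
      refine ⟨⟨(p : ℤ), mem_nonZeroDivisors_of_ne_zero hp0⟩, ?_⟩
      show (p : ℤ) • θ c = 0
      rw [← map_smul, smul_eq_mul, hθ, Submodule.Quotient.mk_eq_zero]
      exact (mem_span_iff p _).mpr ⟨c, by rw [mul_comm]⟩
    · rintro ⟨⟨a, ha⟩, hax⟩
      obtain ⟨y, rfl⟩ := Submodule.Quotient.mk_surjective _ x
      have ha0 : a ≠ 0 := nonZeroDivisors.ne_zero ha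
      have hax' : a • y ∈ I := by
        rwa [show (⟨a, ha⟩ : nonZeroDivisors ℤ) • Submodule.Quotient.mk y
            = (Submodule.Quotient.mk (a • y) : R ⧸ I) from
          (Submodule.Quotient.mk_smul _ a y).symm, Submodule.Quotient.mk_eq_zero] at hax
      obtain ⟨d, hd⟩ := (mem_span_iff p _).mp hax'
      have hy : ∀ g : DeltaPlus p, a * y.coeff g = d * p := fun g => by
        have := congrArg (fun z : MonoidAlgebra ℤ (DeltaPlus p) => z.coeff g) hd
        simp only [happ, MonoidAlgebra.coeff_smul_apply, normPlus_apply, smul_eq_mul, mul_one] at this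
        exact this
      have hyN : y = (y.coeff 1) • normPlus p := by
        ext g
        rw [happ]
        have h1 := hy 1
        have h2 := hy g
        exact mul_left_cancel₀ ha0 (by omega)
      exact ⟨y.coeff 1, by rw [hθ, ← hyN]⟩
  have e1 := (LinearMap.quotKerEquivRange θ).toEquiv
  rw [← hrange, ← Nat.card_congr e1, hker,
    Nat.card_congr (Int.quotientSpanNatEquivZMod p).toEquiv, Nat.card_zmod]

end tors

lemma aux2 (k : ℕ) (c : ℤ) (hc : c ≠ 1) :
    ((1 - X : Polynomial ℤ) ^ k * (1 - C c * X)).rootMultiplicity 1 = k ∧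
    (Polynomial.taylor 1 ((1 - X : Polynomial ℤ) ^ k * (1 - C c * X))).coeff k
      = (-1) ^ k * (1 - c) := by
  set g : Polynomial ℤ := 1 - C c * X with hg
  have hgeval : g.eval 1 = 1 - c := by simp [hg]
  have hgne : g ≠ 0 := by
    intro h
    rw [h] at hgeval
    simp at hgeval
    omega
  have h1X : (1 - X : Polynomial ℤ) = -(X - C 1) := by
    rw [map_one]; ring
  have hmul : (1 - X : Polynomial ℤ) ^ k * g = ((-1) ^ k * g) * (X - C 1) ^ k := by
    rw [h1X, neg_pow]; ring
  have hfacne : ((-1 : Polynomial ℤ)) ^ k * g ≠ 0 :=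
    mul_ne_zero (pow_ne_zero _ (by norm_num)) hgne
  have hroot0 : (((-1 : Polynomial ℤ)) ^ k * g).rootMultiplicity 1 = 0 := by
    apply Polynomial.rootMultiplicity_eq_zero
    intro h
    rw [Polynomial.IsRoot, Polynomial.eval_mul, Polynomial.eval_pow, Polynomial.eval_neg,
      Polynomial.eval_one, hgeval] at h
    rcases mul_eq_zero.mp h with h' | h'
    · exact pow_ne_zero k (by norm_num : (-1 : ℤ) ≠ 0) h'
    · omega
  constructor
  · rw [hmul, Polynomial.rootMultiplicity_mul_X_sub_C_pow hfacne, hroot0, zero_add]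
  · rw [hmul, Polynomial.taylor_mul]
    have h1 : Polynomial.taylor (1 : ℤ) ((X - C 1) ^ k) = X ^ k := by
      rw [Polynomial.taylor_apply, Polynomial.pow_comp, Polynomial.sub_comp,
        Polynomial.X_comp, Polynomial.C_comp]
      simp
    have h2 : Polynomial.taylor (1 : ℤ) ((-1) ^ k * g) = (-1) ^ k * (1 - C c * (X + C 1)) := by
      rw [Polynomial.taylor_apply, Polynomial.mul_comp, Polynomial.pow_comp,
        Polynomial.neg_comp, Polynomial.one_comp, hg, Polynomial.sub_comp,
        Polynomial.one_comp, Polynomial.mul_comp, Polynomial.C_comp, Polynomial.X_comp]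
    rw [h1, h2, Polynomial.coeff_mul_X_pow']
    simp [Polynomial.coeff_zero_eq_eval_zero]


/-- Paper's Corollary `plus_part`: for the multiplication-by-`(1 + p·N⁺)` operator `M` on
`ℤ[Δ⁺]`, one has `det(I − u·M) = (1 − u)^{(p−3)/2}·(1 − (1 + p(p−1)/2)u)`; consequently the
first nonvanishing Taylor coefficient of `det(I − u·M)` at `u = 1` equals
`(−1)^{(p−1)/2}·((p−1)/2)·p`, and the torsion subgroup of `ℤ[Δ⁺]/(p·N⁺·ℤ[Δ⁺])` has
cardinality `p`. -/
theorem stmt14 (p : ℕ) [Fact p.Prime] (hp : Odd p)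
    [Fintype (DeltaPlus p)] [DecidableEq (DeltaPlus p)] :
    Matrix.det ((1 : Matrix (DeltaPlus p) (DeltaPlus p) (Polynomial ℤ)) -
        (X : Polynomial ℤ) • (adjMatPlus p).map C) =
      (1 - X) ^ ((p - 3) / 2) *
        (1 - C (((1 + p * ((p - 1) / 2) : ℕ) : ℤ)) * X) ∧
    (Polynomial.taylor 1
        (Matrix.det ((1 : Matrix (DeltaPlus p) (DeltaPlus p) (Polynomial ℤ)) -
          (X : Polynomial ℤ) • (adjMatPlus p).map C))).coeff
        ((Matrix.det ((1 : Matrix (DeltaPlus p) (DeltaPlus p) (Polynomial ℤ)) -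
          (X : Polynomial ℤ) • (adjMatPlus p).map C)).rootMultiplicity 1) =
      (-1 : ℤ) ^ ((p - 1) / 2) * (((p - 1) / 2 : ℕ) : ℤ) * (p : ℤ) ∧
    Nat.card (Submodule.torsion ℤ
        (MonoidAlgebra ℤ (DeltaPlus p) ⧸ Ideal.span {(p : ℤ) • normPlus p})) = p := by
  have hp3 : 3 ≤ p := by
    rcases hp with ⟨k, hk⟩; have := (Fact.out : p.Prime).two_le; omega
  have hdet := det_eq p hp
  refine ⟨hdet, ?_, torsion_card p⟩
  rw [hdet]
  have hcn : (1 + p * ((p - 1) / 2) : ℕ) ≠ 1 := by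
    have h1 : 1 ≤ (p - 1) / 2 := by omega
    have h2 : 1 ≤ p * ((p - 1) / 2) := Nat.one_le_iff_ne_zero.mpr (by positivity)
    omega
  have hc : (((1 + p * ((p - 1) / 2) : ℕ) : ℤ)) ≠ 1 := by exact_mod_cast hcn
  obtain ⟨h1, h2⟩ := aux2 ((p - 3) / 2) (((1 + p * ((p - 1) / 2) : ℕ) : ℤ)) hc
  rw [h1, h2]
  have hm : (p - 1) / 2 = (p - 3) / 2 + 1 := by omega
  rw [hm, pow_succ]
  push_cast
  ring
end
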